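/- Let G be a finitely generated group, G' a group, and π : G → G' a surjective group homomorphism whose kernel is contained in the Frattini subgroup of G (the intersection of all maximal subgroups of G). Let A be a finite nonempty multiset of elements of G, let π(A) be its image multiset in G' (of the same size |A|), and let 0 ≤ δ ≤ 1 be a real number. Then A has detection probability at least δ in G if and only if π(A) has detection probability at least δ in G'. -/

import Mathlib

open scoped Classical

/-- `A` has detection probability at least `δ` in `G`. -/
def Detects {G : Type*} [Group G] (A : Multiset G) (δ : ℝ) : Prop :=
  ∀ H : Subgroup G, H ≠ ⊤ →
    ((A.filter (fun a => a ∈ H)).card : ℝ) ≤ (1 - δ) * (Multiset.card A : ℝ)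

lemma closure_singleton_isCompactElement {G : Type*} [Group G] (x : G) :
    IsCompactElement (Subgroup.closure {x}) := by
  rw [CompleteLattice.isCompactElement_iff_le_of_directed_sSup_le]
  intro s hne hdir hle
  have hx : x ∈ sSup s := hle (Subgroup.mem_closure_singleton_self x)
  rw [Subgroup.mem_sSup_of_directedOn hne hdir] at hx
  obtain ⟨K, hK, hxK⟩ := hx
  exact ⟨K, hK, (Subgroup.closure_le K).2 (by simpa using hxK)⟩

lemma top_isCompactElement {G : Type*} [Group G] [Group.FG G] :
    IsCompactElement (⊤ : Subgroup G) := by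
  obtain ⟨S, hS⟩ := Group.fg_def.mp ‹Group.FG G›
  have hclo : Subgroup.closure (↑S : Set G) = ⨆ x ∈ S, Subgroup.closure {x} := by
    apply le_antisymm
    · rw [Subgroup.closure_le]
      intro x hx
      exact le_iSup₂ (f := fun (x : G) (_ : x ∈ S) => Subgroup.closure {x}) x hx
        (Subgroup.mem_closure_singleton_self x)
    · exact iSup₂_le fun x hx => Subgroup.closure_mono (by simpa using hx)
  have : (⊤ : Subgroup G) = S.sup fun x => Subgroup.closure {x} := by
    rw [← hS, hclo, Finset.sup_eq_iSup]
  rw [this]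
  exact CompleteLattice.isCompactElement_finsetSup S fun x _ =>
    closure_singleton_isCompactElement x

instance instCoatomicSubgroupFG {G : Type*} [Group G] [Group.FG G] :
    IsCoatomic (Subgroup G) :=
  CompleteLattice.coatomic_of_top_compact top_isCompactElement

theorem stmt3 {G G' : Type*} [Group G] [Group.FG G] [Group G']
    (π : G →* G') (hsurj : Function.Surjective π)
    (hker : π.ker ≤ frattini G)
    (A : Multiset G) (hA : A ≠ 0) (δ : ℝ) (h0 : 0 ≤ δ) (h1 : δ ≤ 1) :
    Detects A δ ↔ Detects (A.map π) δ := by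
  have hcardmap : Multiset.card (A.map π) = Multiset.card A := Multiset.card_map _ _
  have hfilter : ∀ (H' : Subgroup G'),
      Multiset.card ((A.map π).filter (fun a => a ∈ H')) =
        Multiset.card (A.filter (fun a => π a ∈ H')) := by
    intro H'
    rw [Multiset.filter_map, Multiset.card_map]
    rfl
  constructor
  · intro h H' hH'
    have hcomap : Subgroup.comap π H' ≠ ⊤ := by
      intro e
      apply hH'
      exact Subgroup.comap_injective hsurj (by rw [e, Subgroup.comap_top])
    have := h (Subgroup.comap π H') hcomap
    rw [hfilter H', hcardmap]
    simpa using this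
  · intro h H hH
    obtain ⟨M, hM, hHM⟩ := (eq_top_or_exists_le_coatom H).resolve_left hH
    have hkerM : π.ker ≤ M := hker.trans (frattini_le_coatom hM)
    have hmap : Subgroup.map π M ≠ ⊤ := by
      intro e
      apply hM.1
      have : Subgroup.comap π (Subgroup.map π M) = ⊤ := by rw [e, Subgroup.comap_top]
      rwa [Subgroup.comap_map_eq, sup_of_le_left hkerM] at this
    have hbound := h (Subgroup.map π M) hmap
    rw [hfilter, hcardmap] at hbound
    calc ((A.filter (fun a => a ∈ H)).card : ℝ)
        ≤ ((A.filter (fun a => π a ∈ Subgroup.map π M)).card : ℝ) := by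
          exact_mod_cast Multiset.card_le_card (Multiset.monotone_filter_right A
            (fun a ha => Subgroup.mem_map_of_mem π (hHM ha)))
      _ ≤ (1 - δ) * (Multiset.card A : ℝ) := hbound
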